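/- Under the hypotheses of the defining-function lemma (Ω bounded strictly convex with smooth boundary, φ a C² defining function, f = -log φ with ∇²f(x) ≥ (c₀/φ(x))·Id near ∂Ω), if sequences x_k → x₀ ∈ Ω and y_k → y₀ ∈ ∂Ω with x_k, y_k ∈ Ω, then the line segment energy E_f(x_k, y_k) = ∫₀^{‖y_k-x_k‖} ∇²f(x_k + sN(x_k,y_k))(N,N) ds tends to +∞. -/

import Mathlib

noncomputable def segEf {n : ℕ} (f : EuclideanSpace ℝ (Fin n) → ℝ)
    (x y : EuclideanSpace ℝ (Fin n)) : ℝ :=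
  ∫ s in (0:ℝ)..‖y - x‖,
    iteratedFDeriv ℝ 2 f (x + s • (‖y - x‖⁻¹ • (y - x)))
      ![‖y - x‖⁻¹ • (y - x), ‖y - x‖⁻¹ • (y - x)]

open Filter Set Topology

section Aux

variable {n : ℕ}

local notation "E" => EuclideanSpace ℝ (Fin n)

lemma keypos (Ω : Set (EuclideanSpace ℝ (Fin n)))
    (hopen : IsOpen Ω) (hconv : Convex ℝ Ω)
    (φ : EuclideanSpace ℝ (Fin n) → ℝ)
    (hφC2 : ContDiffOn ℝ 2 φ (closure Ω))
    (hφpos : ∀ x ∈ Ω, 0 < φ x)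
    (hφ0 : ∀ x ∈ frontier Ω, φ x = 0)
    (hφν : ∀ x ∈ frontier Ω, fderiv ℝ φ x ≠ 0)
    (hstrict : ∀ x ∈ frontier Ω, ∀ X : EuclideanSpace ℝ (Fin n), X ≠ 0 →
      fderiv ℝ φ x X = 0 → iteratedFDeriv ℝ 2 φ x ![X, X] < 0)
    {x₀ y₀ : EuclideanSpace ℝ (Fin n)} (hx₀ : x₀ ∈ Ω) (hy₀ : y₀ ∈ frontier Ω) :
    0 < fderiv ℝ φ y₀ (x₀ - y₀) := by
  have hy₀c : y₀ ∈ closure Ω := frontier_subset_closure hy₀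
  have hy₀Ω : y₀ ∉ Ω := by
    rw [hopen.frontier_eq] at hy₀; exact hy₀.2
  have hX : x₀ - y₀ ≠ 0 := sub_ne_zero.2 (fun h => hy₀Ω (h ▸ hx₀))
  set X : EuclideanSpace ℝ (Fin n) := x₀ - y₀ with hXdef
  -- points inward
  have hmem : ∀ t : ℝ, t ∈ Ioc (0:ℝ) 1 → y₀ + t • X ∈ Ω := by
    intro t ht
    have := hconv.add_smul_sub_mem_interior' (x := y₀) (y := x₀) hy₀c
      (by rwa [hopen.interior_eq]) ht
    rw [hopen.interior_eq] at this
    rwa [hXdef]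
  set h : ℝ → ℝ := fun t => φ (y₀ + t • X) with hhdef
  have hdφ : DifferentiableAt ℝ φ y₀ := by
    by_contra hc
    exact hφν y₀ hy₀ (fderiv_zero_of_not_differentiableAt hc)
  have hline' : ∀ t : ℝ, HasDerivAt (fun s : ℝ => s • X + y₀) X t := by
    intro t
    simpa using ((hasDerivAt_id t).smul_const X).add_const y₀
  set D : ℝ := fderiv ℝ φ y₀ X with hDdef
  have hh0 : HasDerivAt h D 0 := by
    have hl : HasFDerivAt φ (fderiv ℝ φ y₀) ((0:ℝ) • X + y₀) := by
      simpa using hdφ.hasFDerivAt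
    have := hl.comp_hasDerivAt 0 (hline' 0)
    simpa [hhdef, Function.comp_def, add_comm] using this
  have hh0val : h 0 = 0 := by simp [hhdef, hφ0 y₀ hy₀]
  -- D ≥ 0
  have hslope : Tendsto (slope h 0) (𝓝[>] 0) (𝓝 D) :=
    (hasDerivAt_iff_tendsto_slope.1 hh0).mono_left
      (nhdsWithin_mono _ (fun t ht => ne_of_gt ht))
  have hDnonneg : 0 ≤ D := by
    refine ge_of_tendsto hslope ?_
    filter_upwards [Ioo_mem_nhdsGT_of_mem (by norm_num : (0:ℝ) ∈ Ico (0:ℝ) 1)] with t ht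
    have hpos : 0 < h t := hφpos _ (hmem t ⟨ht.1, ht.2.le⟩)
    have : slope h 0 t = h t / t := by
      simp [slope, hh0val, div_eq_inv_mul]
    rw [this]
    exact le_of_lt (div_pos hpos ht.1)
  rcases lt_or_eq_of_le hDnonneg with hDpos | hDzero
  · exact hDpos
  -- case D = 0 : contradiction via strict convexity
  exfalso
  have hD0 : D = 0 := hDzero.symm
  have hH : iteratedFDeriv ℝ 2 φ y₀ ![X, X] < 0 := hstrict y₀ hy₀ X hX hD0
  rw [iteratedFDeriv_two_apply] at hH
  simp only [Matrix.cons_val_zero, Matrix.cons_val_one, Matrix.head_cons] at hH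
  set H := fderiv ℝ (fderiv ℝ φ) y₀ with hHdef
  have hdG : DifferentiableAt ℝ (fderiv ℝ φ) y₀ := by
    by_contra hc
    rw [fderiv_zero_of_not_differentiableAt hc] at hHdef
    rw [hHdef] at hH
    simp at hH
  set u : ℝ → ℝ := fun t => fderiv ℝ φ (y₀ + t • X) X with hudef
  have hu0 : HasDerivAt u (H X X) 0 := by
    have h1 : HasDerivAt (fun t : ℝ => fderiv ℝ φ (y₀ + t • X)) (H X) 0 := by
      have hl : HasFDerivAt (fderiv ℝ φ) H ((0:ℝ) • X + y₀) := by
        simpa using hdG.hasFDerivAt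
      have := hl.comp_hasDerivAt 0 (hline' 0)
      simpa [Function.comp_def, add_comm] using this
    simpa using h1.clm_apply (hasDerivAt_const 0 X)
  have hu0val : u 0 = 0 := by simpa [hudef] using hD0
  -- u t < 0 on a right neighborhood
  have huslope : Tendsto (slope u 0) (𝓝[>] 0) (𝓝 (H X X)) :=
    (hasDerivAt_iff_tendsto_slope.1 hu0).mono_left
      (nhdsWithin_mono _ (fun t ht => ne_of_gt ht))
  have hev : ∀ᶠ t in 𝓝[>] (0:ℝ), slope u 0 t < 0 :=
    huslope.eventually (eventually_lt_nhds hH)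
  rw [eventually_nhdsWithin_iff] at hev
  rcases Metric.eventually_nhds_iff.1 hev with ⟨δ, hδpos, hδ⟩
  set t₀ : ℝ := min δ 1 / 2 with ht₀def
  have ht₀pos : 0 < t₀ := by positivity
  have ht₀δ : t₀ < δ := by
    have : t₀ ≤ δ / 2 := by
      apply div_le_div_of_nonneg_right (min_le_left _ _)
      norm_num
    linarith
  have ht₀1 : t₀ ≤ 1 := by
    have : t₀ ≤ 1 / 2 := by
      apply div_le_div_of_nonneg_right (min_le_right _ _)
      norm_num
    linarith
  have huneg : ∀ t : ℝ, t ∈ Ioo (0:ℝ) t₀ → u t < 0 := by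
    intro t ht
    have hdist : dist t 0 < δ := by
      rw [Real.dist_eq, sub_zero, abs_of_pos ht.1]
      linarith [ht.2]
    have := hδ hdist ht.1
    have hslope_eq : slope u 0 t = u t / t := by
      simp [slope, hu0val, div_eq_inv_mul]
    rw [hslope_eq] at this
    exact (div_neg_iff.1 this).elim (fun hc => absurd ht.1 (not_lt.2 hc.2.le)) (fun hc => hc.1)
  -- MVT on [0, t₀]
  have hcont : ContinuousOn h (Icc 0 t₀) := by
    apply (hφC2.continuousOn).comp
    · exact (continuous_const.add (continuous_id.smul continuous_const)).continuousOn
    · intro t ht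
      rcases eq_or_lt_of_le ht.1 with heq | hlt
      · simp [← heq]; exact hy₀c
      · exact subset_closure (hmem t ⟨hlt, ht.2.trans ht₀1⟩)
  have hderiv : ∀ t ∈ Ioo (0:ℝ) t₀, HasDerivAt h (u t) t := by
    intro t ht
    have hz : y₀ + t • X ∈ Ω := hmem t ⟨ht.1, (ht.2.le.trans ht₀1)⟩
    have hdz : DifferentiableAt ℝ φ (y₀ + t • X) :=
      (hφC2.contDiffAt (Filter.mem_of_superset (hopen.mem_nhds hz)
        subset_closure)).differentiableAt two_ne_zero
    have hl : HasFDerivAt φ (fderiv ℝ φ (y₀ + t • X)) (t • X + y₀) := by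
      rw [add_comm (t • X) y₀]; exact hdz.hasFDerivAt
    have := hl.comp_hasDerivAt t (hline' t)
    simpa [hhdef, hudef, Function.comp_def, add_comm] using this
  obtain ⟨c, hc, hceq⟩ := exists_hasDerivAt_eq_slope h u ht₀pos hcont hderiv
  have hpos : 0 < h t₀ := hφpos _ (hmem t₀ ⟨ht₀pos, ht₀1⟩)
  have : 0 < u c := by
    rw [hceq, hh0val, sub_zero, sub_zero]
    positivity
  exact absurd (huneg c hc) (not_lt.2 this.le)


end Aux

lemma ftcEf {n : ℕ} (Ω : Set (EuclideanSpace ℝ (Fin n)))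
    (hopen : IsOpen Ω) (hconv : Convex ℝ Ω)
    (f : EuclideanSpace ℝ (Fin n) → ℝ) (hf : ContDiffOn ℝ 2 f Ω)
    {x y : EuclideanSpace ℝ (Fin n)} (hx : x ∈ Ω) (hy : y ∈ Ω) (hxy : x ≠ y) :
    segEf f x y = fderiv ℝ f y (‖y - x‖⁻¹ • (y - x)) - fderiv ℝ f x (‖y - x‖⁻¹ • (y - x)) := by
  set L : ℝ := ‖y - x‖ with hLdef
  have hL : 0 < L := by
    rw [hLdef, norm_pos_iff]
    exact sub_ne_zero.2 (Ne.symm hxy)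
  set N : EuclideanSpace ℝ (Fin n) := L⁻¹ • (y - x) with hNdef
  set p : ℝ → EuclideanSpace ℝ (Fin n) := fun s => x + s • N with hpdef
  have hps : ∀ s : ℝ, p s = x + (s / L) • (y - x) := by
    intro s
    rw [hpdef]
    simp only [hNdef, smul_smul, div_eq_mul_inv]
  have hmem : ∀ s ∈ Icc (0:ℝ) L, p s ∈ Ω := by
    intro s hs
    rw [hps]
    exact hconv.add_smul_sub_mem hx hy
      ⟨div_nonneg hs.1 hL.le, (div_le_one hL).2 hs.2⟩
  have hp0 : p 0 = x := by simp [hpdef]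
  have hpL : p L = y := by
    rw [hps, div_self hL.ne']
    simp
  have hline : ∀ s : ℝ, HasDerivAt p N s := by
    intro s
    simpa [hpdef] using ((hasDerivAt_id s).smul_const N).const_add x
  set I : ℝ → ℝ := fun s => iteratedFDeriv ℝ 2 f (p s) ![N, N] with hIdef
  set g₁ : ℝ → ℝ := fun s => fderiv ℝ f (p s) N with hg₁def
  have huIcc : uIcc (0:ℝ) L = Icc 0 L := uIcc_of_le hL.le
  have hg₁deriv : ∀ s ∈ uIcc (0:ℝ) L, HasDerivAt g₁ (I s) s := by
    intro s hs
    rw [huIcc] at hs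
    have hz : p s ∈ Ω := hmem s hs
    have hfz : ContDiffAt ℝ 2 f (p s) := hf.contDiffAt (hopen.mem_nhds hz)
    have hG : DifferentiableAt ℝ (fderiv ℝ f) (p s) :=
      (hfz.fderiv_right (m := 1) (by norm_num)).differentiableAt one_ne_zero
    have h1 : HasDerivAt (fun t : ℝ => fderiv ℝ f (p t)) (fderiv ℝ (fderiv ℝ f) (p s) N) s :=
      hG.hasFDerivAt.comp_hasDerivAt s (hline s)
    have h2 := h1.clm_apply (hasDerivAt_const s N)
    have hIeq : I s = fderiv ℝ (fderiv ℝ f) (p s) N N + fderiv ℝ f (p s) 0 := by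
      rw [hIdef]
      simp only [iteratedFDeriv_two_apply, Matrix.cons_val_zero, Matrix.cons_val_one,
        Matrix.head_cons, map_zero, add_zero]
    rw [hIeq]
    exact h2
  have hIcont : ContinuousOn I (uIcc (0:ℝ) L) := by
    rw [huIcc]
    have hIt : ContinuousOn (fun z => iteratedFDeriv ℝ 2 f z ![N, N]) Ω := by
      have h1 : ContinuousOn (iteratedFDeriv ℝ 2 f) Ω := by
        have := hf.continuousOn_iteratedFDerivWithin (m := 2) le_rfl hopen.uniqueDiffOn
        refine this.congr fun z hz => ?_
        exact (iteratedFDerivWithin_of_isOpen 2 hopen hz).symm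
      exact (ContinuousMultilinearMap.apply ℝ (fun _ : Fin 2 => EuclideanSpace ℝ (Fin n)) ℝ
        ![N, N]).continuous.comp_continuousOn h1
    exact hIt.comp (Continuous.continuousOn (by continuity)) hmem
  have hFTC := intervalIntegral.integral_eq_sub_of_hasDerivAt hg₁deriv
    (hIcont.intervalIntegrable)
  have hseg : segEf f x y = ∫ s in (0:ℝ)..L, I s := rfl
  rw [hseg, hFTC]
  have h1 : g₁ L = fderiv ℝ f y N := by rw [hg₁def]; simp only [hpL]
  have h2 : g₁ 0 = fderiv ℝ f x N := by rw [hg₁def]; simp only [hp0]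
  rw [h1, h2]


set_option linter.unusedVariables false in
theorem stmt11 {n : ℕ} (Ω : Set (EuclideanSpace ℝ (Fin n)))
    (hopen : IsOpen Ω) (hbd : Bornology.IsBounded Ω) (hconv : Convex ℝ Ω)
    (φ : EuclideanSpace ℝ (Fin n) → ℝ)
    (hφC2 : ContDiffOn ℝ 2 φ (closure Ω))
    (hφpos : ∀ x ∈ Ω, 0 < φ x)
    (hφ0 : ∀ x ∈ frontier Ω, φ x = 0)
    (hφν : ∀ x ∈ frontier Ω, fderiv ℝ φ x ≠ 0)
    (hstrict : ∀ x ∈ frontier Ω, ∀ X : EuclideanSpace ℝ (Fin n), X ≠ 0 →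
      fderiv ℝ φ x X = 0 → iteratedFDeriv ℝ 2 φ x ![X, X] < 0)
    (xk yk : ℕ → EuclideanSpace ℝ (Fin n))
    (hxk : ∀ k, xk k ∈ Ω) (hyk : ∀ k, yk k ∈ Ω)
    (x₀ y₀ : EuclideanSpace ℝ (Fin n))
    (hx₀ : x₀ ∈ Ω) (hy₀ : y₀ ∈ frontier Ω)
    (hxlim : Filter.Tendsto xk Filter.atTop (nhds x₀))
    (hylim : Filter.Tendsto yk Filter.atTop (nhds y₀)) :
    Filter.Tendsto (fun k => segEf (fun z => -Real.log (φ z)) (xk k) (yk k))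
      Filter.atTop Filter.atTop := by
  classical
  set f : EuclideanSpace ℝ (Fin n) → ℝ := fun z => -Real.log (φ z) with hfdef
  have hy₀c : y₀ ∈ closure Ω := frontier_subset_closure hy₀
  have hy₀Ω : y₀ ∉ Ω := by rw [hopen.frontier_eq] at hy₀; exact hy₀.2
  have hxy₀ : y₀ - x₀ ≠ 0 := sub_ne_zero.2 (fun h => hy₀Ω (h ▸ hx₀))
  have hL0 : 0 < ‖y₀ - x₀‖ := norm_pos_iff.2 hxy₀
  -- limits of direction and lengths
  have hsub : Tendsto (fun k => yk k - xk k) atTop (𝓝 (y₀ - x₀)) := hylim.sub hxlim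
  have heL : Tendsto (fun k => ‖yk k - xk k‖) atTop (𝓝 ‖y₀ - x₀‖) := hsub.norm
  have hevne : ∀ᶠ k in atTop, 0 < ‖yk k - xk k‖ := heL.eventually (eventually_gt_nhds hL0)
  set Ninf : EuclideanSpace ℝ (Fin n) := ‖y₀ - x₀‖⁻¹ • (y₀ - x₀) with hNinfdef
  set Nk : ℕ → EuclideanSpace ℝ (Fin n) := fun k => ‖yk k - xk k‖⁻¹ • (yk k - xk k)
    with hNkdef
  have hNlim : Tendsto Nk atTop (𝓝 Ninf) := (heL.inv₀ hL0.ne').smul hsub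
  -- smoothness of f on Ω
  have hΩc2 : ContDiffOn ℝ 2 φ Ω := hφC2.mono subset_closure
  have hfC2 : ContDiffOn ℝ 2 f Ω := (hΩc2.log (fun z hz => (hφpos z hz).ne')).neg
  -- fderiv formula
  have hfd : ∀ z ∈ Ω, ∀ v, fderiv ℝ f z v = -((φ z)⁻¹ * fderiv ℝ φ z v) := by
    intro z hz v
    have hdφz : DifferentiableAt ℝ φ z :=
      (hφC2.contDiffAt (Filter.mem_of_superset (hopen.mem_nhds hz)
        subset_closure)).differentiableAt two_ne_zero
    have hlog : HasDerivAt Real.log (φ z)⁻¹ (φ z) := Real.hasDerivAt_log (hφpos z hz).ne'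
    have hcomp := hlog.comp_hasFDerivAt z hdφz.hasFDerivAt
    have hneg := hcomp.neg
    have : fderiv ℝ f z = -((φ z)⁻¹ • fderiv ℝ φ z) := by
      have := hneg.fderiv
      exact this
    rw [this]
    simp [smul_eq_mul]
  -- continuity of fderiv up to boundary
  have hUD : UniqueDiffOn ℝ (closure Ω) :=
    uniqueDiffOn_convex hconv.closure ⟨x₀, interior_maximal subset_closure hopen hx₀⟩
  have htendW : Tendsto yk atTop (𝓝[closure Ω] y₀) :=
    tendsto_nhdsWithin_iff.2 ⟨hylim, Eventually.of_forall fun k => subset_closure (hyk k)⟩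
  have hGy : Tendsto (fun k => fderiv ℝ φ (yk k)) atTop (𝓝 (fderiv ℝ φ y₀)) := by
    have hGcont := hφC2.continuousOn_fderivWithin hUD one_le_two
    have h1 := (hGcont y₀ hy₀c).tendsto.comp htendW
    have hdφy₀ : DifferentiableAt ℝ φ y₀ := by
      by_contra hc
      exact hφν y₀ hy₀ (fderiv_zero_of_not_differentiableAt hc)
    rw [hdφy₀.fderivWithin (hUD y₀ hy₀c)] at h1
    refine h1.congr fun k => ?_
    exact fderivWithin_of_mem_nhds
      (Filter.mem_of_superset (hopen.mem_nhds (hyk k)) subset_closure)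
  have hApply : Tendsto (fun k => -(fderiv ℝ φ (yk k) (Nk k))) atTop
      (𝓝 (-(fderiv ℝ φ y₀ Ninf))) := by
    have heval : Continuous fun p : (EuclideanSpace ℝ (Fin n) →L[ℝ] ℝ) ×
        EuclideanSpace ℝ (Fin n) => p.1 p.2 := isBoundedBilinearMap_apply.continuous
    exact ((heval.tendsto _).comp (hGy.prodMk_nhds hNlim)).neg
  -- positivity
  have hkey : 0 < fderiv ℝ φ y₀ (x₀ - y₀) :=
    keypos Ω hopen hconv φ hφC2 hφpos hφ0 hφν hstrict hx₀ hy₀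
  have hcpos : 0 < -(fderiv ℝ φ y₀ Ninf) := by
    have : fderiv ℝ φ y₀ Ninf = ‖y₀ - x₀‖⁻¹ * -(fderiv ℝ φ y₀ (x₀ - y₀)) := by
      rw [hNinfdef, map_smul, smul_eq_mul]
      congr 1
      rw [show y₀ - x₀ = -(x₀ - y₀) by abel, map_neg]
    rw [this]
    have hinv : 0 < ‖y₀ - x₀‖⁻¹ := by positivity
    nlinarith
  -- inverse blow-up
  have hinvT : Tendsto (fun k => (φ (yk k))⁻¹) atTop atTop := by
    have hφy : Tendsto (fun k => φ (yk k)) atTop (𝓝[>] 0) := by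
      refine tendsto_nhdsWithin_iff.2 ⟨?_, Eventually.of_forall fun k => hφpos _ (hyk k)⟩
      have := (hφC2.continuousOn y₀ hy₀c).tendsto.comp htendW
      rwa [hφ0 y₀ hy₀] at this
    exact hφy.inv_tendsto_nhdsGT_zero
  have hA : Tendsto (fun k => (φ (yk k))⁻¹ * -(fderiv ℝ φ (yk k) (Nk k))) atTop atTop :=
    hinvT.atTop_mul_pos hcpos hApply
  -- bounded term
  have hB : Tendsto (fun k => (φ (xk k))⁻¹ * fderiv ℝ φ (xk k) (Nk k)) atTop
      (𝓝 ((φ x₀)⁻¹ * fderiv ℝ φ x₀ Ninf)) := by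
    have hφx : Tendsto (fun k => φ (xk k)) atTop (𝓝 (φ x₀)) := by
      have hc : ContinuousAt φ x₀ :=
        ((hφC2.contDiffAt (Filter.mem_of_superset (hopen.mem_nhds hx₀)
          subset_closure))).continuousAt
      exact hc.tendsto.comp hxlim
    have hGx : Tendsto (fun k => fderiv ℝ φ (xk k)) atTop (𝓝 (fderiv ℝ φ x₀)) := by
      have hfdΩ := hΩc2.continuousOn_fderiv_of_isOpen hopen one_le_two
      have hc : ContinuousAt (fderiv ℝ φ) x₀ :=
        hfdΩ.continuousAt (hopen.mem_nhds hx₀)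
      exact hc.tendsto.comp hxlim
    have heval : Continuous fun p : (EuclideanSpace ℝ (Fin n) →L[ℝ] ℝ) ×
        EuclideanSpace ℝ (Fin n) => p.1 p.2 := isBoundedBilinearMap_apply.continuous
    exact (hφx.inv₀ (hφpos x₀ hx₀).ne').mul
      ((heval.tendsto _).comp (hGx.prodMk_nhds hNlim))
  refine (hA.atTop_add hB).congr' ?_
  filter_upwards [hevne] with k hk
  have hne : xk k ≠ yk k := by
    intro h
    rw [h] at hk
    simp at hk
  rw [ftcEf Ω hopen hconv f hfC2 (hxk k) (hyk k) hne,
    hfd _ (hyk k) _, hfd _ (hxk k) _]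
  ring
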